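/- Let M = [a,b) and N = [c,d) be interval modules with 0 ≤ a ≤ c < d ≤ b (the support of N contained in that of M). Then S_{M,N} = [c−a, d−a) and S_{N,M} = [b−d, b−c). -/

import Mathlib

open scoped NNReal

/-- A persistence module: a functor from `[0,∞)` to real vector spaces. -/
structure PM where
  V : ℝ≥0 → Type
  [grp : ∀ x, AddCommGroup (V x)]
  [mod : ∀ x, Module ℝ (V x)]
  map : ∀ {x y : ℝ≥0}, x ≤ y → (V x →ₗ[ℝ] V y)
  map_id : ∀ x : ℝ≥0, map (le_refl x) = LinearMap.id
  map_comp : ∀ {x y z : ℝ≥0} (h1 : x ≤ y) (h2 : y ≤ z),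
    (map h2).comp (map h1) = map (h1.trans h2)

attribute [instance] PM.grp PM.mod

/-- A morphism of persistence modules. -/
structure PM.Hom (M N : PM) where
  app : ∀ x : ℝ≥0, M.V x →ₗ[ℝ] N.V x
  comm : ∀ {x y : ℝ≥0} (h : x ≤ y), (app y).comp (M.map h) = (N.map h).comp (app x)

/-- The shifted module `M·ε`. -/
def PM.shift (M : PM) (ε : ℝ≥0) : PM where
  V x := M.V (x + ε)
  grp x := inferInstance
  mod x := inferInstance
  map h := M.map (add_le_add h (le_refl ε))
  map_id x := M.map_id (x + ε)
  map_comp h1 h2 := M.map_comp _ _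

noncomputable def intervalSub (α β : ℝ) (x : ℝ≥0) : Submodule ℝ ℝ :=
  if α ≤ (x : ℝ) ∧ (x : ℝ) < β then ⊤ else ⊥

/-- The interval module `[α,β)`. -/
noncomputable def intervalModule (α β : ℝ) : PM where
  V x := ↥(intervalSub α β x)
  grp x := inferInstance
  mod x := inferInstance
  map {x y} h := LinearMap.codRestrict _
      ((if α ≤ (x : ℝ) ∧ (y : ℝ) < β then (1 : ℝ) else 0) • (intervalSub α β x).subtype)
      (by
        intro v
        by_cases hy : α ≤ (y : ℝ) ∧ (y : ℝ) < β
        · simp [intervalSub, hy]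
        · have hc : ¬(α ≤ (x : ℝ) ∧ (y : ℝ) < β) := by
            intro hc
            exact hy ⟨le_trans hc.1 (by exact_mod_cast h), hc.2⟩
          simp only [if_neg hc, zero_smul, LinearMap.zero_apply, Submodule.zero_mem])
  map_id x := by
    ext v
    by_cases hx : α ≤ (x : ℝ) ∧ (x : ℝ) < β
    · simp [hx]
    · have hv : (v : ℝ) = 0 := by
        have h2 := v.2
        simp only [intervalSub, if_neg hx, Submodule.mem_bot] at h2
        exact h2
      simp [hx, hv]
  map_comp {x y z} h1 h2 := by
    ext v
    by_cases hC : α ≤ (x : ℝ) ∧ (z : ℝ) < β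
    · have hA : α ≤ (x : ℝ) ∧ (y : ℝ) < β :=
        ⟨hC.1, lt_of_le_of_lt (by exact_mod_cast h2) hC.2⟩
      have hB : α ≤ (y : ℝ) ∧ (z : ℝ) < β :=
        ⟨le_trans hC.1 (by exact_mod_cast h1), hC.2⟩
      simp [hA, hB, hC]
    · rcases not_and_or.mp hC with hx | hz
      · have hA : ¬(α ≤ (x : ℝ) ∧ (y : ℝ) < β) := fun h => hx h.1
        simp [hA, hC]
        split_ifs <;> simp
      · have hB : ¬(α ≤ (y : ℝ) ∧ (z : ℝ) < β) := fun h => hz h.2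
        simp [hB, hC]

/-- `Hom(M,N) ≠ {0}`: there is a nonzero morphism from `M` to `N`. -/
def HomNeZero (M N : PM) : Prop := ∃ F : PM.Hom M N, ∃ x, F.app x ≠ 0

/-- `S_{M,N} = {x ≥ 0 : Hom(M, N·x) ≠ {0}}`. -/
noncomputable def Sset (M N : PM) : Set ℝ :=
  {x : ℝ | 0 ≤ x ∧ HomNeZero M (N.shift x.toNNReal)}

/-- The canonical morphism `Π_M^{M·τ} : M → M·τ`. -/
def PM.pi (M : PM) (τ : ℝ≥0) : M.Hom (M.shift τ) where
  app x := M.map le_self_add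
  comm {x y} h := by
    show (M.map le_self_add).comp (M.map h) =
      (M.map (add_le_add h (le_refl τ))).comp (M.map le_self_add)
    rw [M.map_comp, M.map_comp]

/-- The pair `(Φ, Ψ)` is an `ε`-interleaving between `M` and `N`:
`(Ψ·ε) ∘ Φ = Π_M^{M·2ε}` and `(Φ·ε) ∘ Ψ = Π_N^{N·2ε}` (expressed pointwise). -/
def IsInterleaving (M N : PM) (ε : ℝ≥0)
    (Φ : M.Hom (N.shift ε)) (Ψ : N.Hom (M.shift ε)) : Prop :=
  (∀ x : ℝ≥0, (Ψ.app (x + ε)).comp (Φ.app x) =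
      M.map (le_self_add.trans le_self_add : x ≤ x + ε + ε)) ∧
  (∀ x : ℝ≥0, (Φ.app (x + ε)).comp (Ψ.app x) =
      N.map (le_self_add.trans le_self_add : x ≤ x + ε + ε))


lemma intervalSub_eq_top {α β : ℝ} {x : ℝ≥0} (h : α ≤ (x:ℝ) ∧ (x:ℝ) < β) :
    intervalSub α β x = ⊤ := by simp [intervalSub, h]

lemma intervalSub_eq_bot {α β : ℝ} {x : ℝ≥0} (h : ¬(α ≤ (x:ℝ) ∧ (x:ℝ) < β)) :
    intervalSub α β x = ⊥ := by simp [intervalSub, h]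

lemma subsingleton_of_not {α β : ℝ} {x : ℝ≥0} (h : ¬(α ≤ (x:ℝ) ∧ (x:ℝ) < β)) :
    Subsingleton ↥(intervalSub α β x) := by
  rw [intervalSub_eq_bot h]
  infer_instance

lemma lm_zero_src {A B : Type} [AddCommGroup A] [Module ℝ A] [AddCommGroup B] [Module ℝ B]
    (h : Subsingleton A) (f : A →ₗ[ℝ] B) : f = 0 :=
  LinearMap.ext fun v => by rw [h.elim v 0, map_zero]; rfl

lemma lm_zero_tgt {A B : Type} [AddCommGroup A] [Module ℝ A] [AddCommGroup B] [Module ℝ B]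
    (h : Subsingleton B) (f : A →ₗ[ℝ] B) : f = 0 :=
  LinearMap.ext fun v => h.elim _ _

lemma val_eq_zero_of_not {α β : ℝ} {x : ℝ≥0} (h : ¬(α ≤ (x:ℝ) ∧ (x:ℝ) < β))
    (v : ↥(intervalSub α β x)) : (v : ℝ) = 0 := by
  have h3 := (le_of_eq (intervalSub_eq_bot h)) v.2
  simpa using h3

/-- The building block of the canonical morphism between interval modules. -/
noncomputable def auxApp (α β γ δ : ℝ) (ε : ℝ≥0) (x : ℝ≥0) :
    ↥(intervalSub α β x) →ₗ[ℝ] ↥(intervalSub γ δ (x + ε)) :=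
  LinearMap.codRestrict (intervalSub γ δ (x + ε))
    ((if γ ≤ (x:ℝ) + ε ∧ (x:ℝ) + ε < δ then (1:ℝ) else 0) • (intervalSub α β x).subtype)
    (by
      intro v
      by_cases h : γ ≤ ((x + ε : ℝ≥0):ℝ) ∧ ((x + ε : ℝ≥0):ℝ) < δ
      · rw [intervalSub_eq_top h]; trivial
      · push_cast at h
        rw [if_neg h, intervalSub_eq_bot (by push_cast; exact h)]
        simp)

lemma auxComm (α β γ δ : ℝ) (ε : ℝ≥0) (hγ : γ ≤ α + ε) (hδ : δ ≤ β + ε)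
    {x y : ℝ≥0} (h : x ≤ y) :
    (auxApp α β γ δ ε y).comp ((intervalModule α β).map h)
      = ((intervalModule γ δ).map (add_le_add h (le_refl ε))).comp (auxApp α β γ δ ε x) := by
  ext v
  show (if γ ≤ (y:ℝ) + ε ∧ (y:ℝ) + ε < δ then (1:ℝ) else 0) *
      ((if α ≤ (x:ℝ) ∧ (y:ℝ) < β then (1:ℝ) else 0) *
        (show ↥(intervalSub α β x) from v : ℝ)) =
    (if γ ≤ ((x + ε : ℝ≥0):ℝ) ∧ ((y + ε : ℝ≥0):ℝ) < δ then (1:ℝ) else 0) *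
      ((if γ ≤ (x:ℝ) + ε ∧ (x:ℝ) + ε < δ then (1:ℝ) else 0) *
        (show ↥(intervalSub α β x) from v : ℝ))
  push_cast
  by_cases hx : α ≤ (x:ℝ) ∧ (x:ℝ) < β
  · have hxy : (x:ℝ) ≤ (y:ℝ) := by exact_mod_cast h
    by_cases H : (y:ℝ) + ε < δ
    · have h1 : γ ≤ (x:ℝ) + ε := le_trans hγ (by linarith [hx.1])
      have h2 : γ ≤ (y:ℝ) + ε := le_trans h1 (by linarith)
      have h3 : (x:ℝ) + ε < δ := lt_of_le_of_lt (by linarith) H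
      have h4 : (y:ℝ) < β := by linarith
      simp [h1, h2, h3, h4, H, hx.1]
    · simp [H]
  · erw [val_eq_zero_of_not hx v]
    ring

/-- The canonical morphism between interval modules. -/
noncomputable def intHom (α β γ δ : ℝ) (ε : ℝ≥0)
    (hγ : γ ≤ α + ε) (hδ : δ ≤ β + ε) :
    (intervalModule α β).Hom ((intervalModule γ δ).shift ε) where
  app x := auxApp α β γ δ ε x
  comm h := auxComm α β γ δ ε hγ hδ h

lemma homNeZero_of (α β γ δ : ℝ) (ε : ℝ≥0) (hα : 0 ≤ α) (hαβ : α < β)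
    (hγ : γ ≤ α + ε) (hδ : δ ≤ β + ε) (hεδ : α + (ε:ℝ) < δ) :
    HomNeZero (intervalModule α β) ((intervalModule γ δ).shift ε) := by
  refine ⟨intHom α β γ δ ε hγ hδ, α.toNNReal, ?_⟩
  have hca : ((α.toNNReal : ℝ≥0) : ℝ) = α := Real.coe_toNNReal α hα
  have hmem : (1:ℝ) ∈ intervalSub α β α.toNNReal := by
    rw [intervalSub_eq_top (by rw [hca]; exact ⟨le_refl _, hαβ⟩)]
    trivial
  set v0 : ↥(intervalSub α β α.toNNReal) := ⟨(1:ℝ), hmem⟩ with hv0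
  intro h0
  have h1 := LinearMap.congr_fun h0 v0
  have h2 : (if γ ≤ ((α.toNNReal : ℝ≥0):ℝ) + ε ∧ ((α.toNNReal : ℝ≥0):ℝ) + ε < δ
        then (1:ℝ) else 0) * 1 = 0 :=
    congrArg (fun w => (show ↥(intervalSub γ δ (α.toNNReal + ε)) from w : ℝ)) h1
  rw [hca, if_pos ⟨hγ, hεδ⟩, mul_one] at h2
  exact one_ne_zero h2

lemma of_homNeZero (α β γ δ : ℝ) (ε : ℝ≥0) (hα : 0 ≤ α)
    (h : HomNeZero (intervalModule α β) ((intervalModule γ δ).shift ε)) :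
    γ ≤ α + ε ∧ δ ≤ β + ε ∧ α + (ε:ℝ) < δ := by
  obtain ⟨F, y, hF⟩ := h
  have hy : α ≤ (y:ℝ) ∧ (y:ℝ) < β := by
    by_contra hy
    exact hF (lm_zero_src (subsingleton_of_not hy) (F.app y))
  have hy' : γ ≤ ((y+ε : ℝ≥0):ℝ) ∧ ((y+ε : ℝ≥0):ℝ) < δ := by
    by_contra hy'
    exact hF (lm_zero_tgt (subsingleton_of_not hy') (F.app y))
  push_cast at hy'
  refine ⟨?_, ?_, by linarith [hy.1, hy'.2]⟩
  · -- pull back to α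
    by_contra hγ
    push_neg at hγ
    set x : ℝ≥0 := α.toNNReal with hxdef
    have hcx : ((x : ℝ≥0) : ℝ) = α := Real.coe_toNNReal α hα
    have hxy : x ≤ y := by
      rw [← NNReal.coe_le_coe, hcx]; exact hy.1
    have hbot : ¬(γ ≤ ((x+ε:ℝ≥0):ℝ) ∧ ((x+ε:ℝ≥0):ℝ) < δ) := by
      push_cast [hcx]
      intro hcon
      linarith [hcon.1]
    have happx : F.app x = 0 := lm_zero_tgt (subsingleton_of_not hbot) (F.app x)
    apply hF
    apply LinearMap.ext
    intro w
    have hwmem : ((show ↥(intervalSub α β y) from w : ℝ)) ∈ intervalSub α β x := by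
      rw [intervalSub_eq_top (by rw [hcx]; exact ⟨le_refl _, lt_of_le_of_lt hy.1 hy.2⟩)]
      trivial
    set v : ↥(intervalSub α β x) := ⟨_, hwmem⟩ with hvdef
    have hkey : (intervalModule α β).map hxy v = w := by
      apply Subtype.ext
      show (if α ≤ (x:ℝ) ∧ (y:ℝ) < β then (1:ℝ) else 0) *
          (show ↥(intervalSub α β y) from w : ℝ) = _
      rw [if_pos ⟨by rw [hcx], hy.2⟩, one_mul]
    have hc := LinearMap.congr_fun (F.comm hxy) v
    erw [LinearMap.comp_apply, LinearMap.comp_apply] at hc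
    rw [hkey, happx] at hc
    erw [LinearMap.comp_zero, LinearMap.zero_apply] at hc
    rw [hc]
    rfl
  · -- push forward to β
    by_contra hδ'
    push_neg at hδ'
    set z : ℝ≥0 := β.toNNReal with hzdef
    have hcz : ((z : ℝ≥0) : ℝ) = β :=
      Real.coe_toNNReal β (le_trans hα (le_of_lt (lt_of_le_of_lt hy.1 hy.2)))
    have hyz : y ≤ z := by
      rw [← NNReal.coe_le_coe, hcz]; exact le_of_lt hy.2
    have hbotz : ¬(α ≤ (z:ℝ) ∧ (z:ℝ) < β) := by
      rw [hcz]; intro hcon; exact lt_irrefl β hcon.2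
    have happz : F.app z = 0 := lm_zero_src (subsingleton_of_not hbotz) (F.app z)
    apply hF
    apply LinearMap.ext
    intro v
    have hc := LinearMap.congr_fun (F.comm hyz) v
    simp only [LinearMap.comp_apply] at hc
    rw [happz] at hc
    simp only [LinearMap.zero_apply] at hc
    have hval : (0:ℝ) = (if γ ≤ ((y+ε:ℝ≥0):ℝ) ∧ ((z+ε:ℝ≥0):ℝ) < δ then (1:ℝ) else 0) *
        (show ↥(intervalSub γ δ (y+ε)) from F.app y v : ℝ) :=
      congrArg (fun w => (show ↥(intervalSub γ δ (z + ε)) from w : ℝ)) hc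
    have hcond : γ ≤ ((y+ε:ℝ≥0):ℝ) ∧ ((z+ε:ℝ≥0):ℝ) < δ := by
      push_cast [hcz]
      exact ⟨by push_cast at hy' ⊢; exact hy'.1, by linarith⟩
    rw [if_pos hcond, one_mul] at hval
    exact Subtype.ext hval.symm

theorem stmt17 (a b c d : ℝ) (ha : 0 ≤ a) (hac : a ≤ c) (hcd : c < d) (hdb : d ≤ b) :
    Sset (intervalModule a b) (intervalModule c d) = Set.Ico (c - a) (d - a) ∧
    Sset (intervalModule c d) (intervalModule a b) = Set.Ico (b - d) (b - c) := by
  have hab : a < b := lt_of_le_of_lt hac (lt_of_lt_of_le hcd hdb)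
  have hc0 : 0 ≤ c := le_trans ha hac
  constructor
  · ext x
    simp only [Sset, Set.mem_setOf_eq, Set.mem_Ico]
    constructor
    · rintro ⟨hx0, hH⟩
      have hcoe : ((x.toNNReal : ℝ≥0) : ℝ) = x := Real.coe_toNNReal x hx0
      obtain ⟨h1, h2, h3⟩ := of_homNeZero a b c d x.toNNReal ha hH
      rw [hcoe] at h1 h3
      constructor <;> linarith
    · rintro ⟨h1, h2⟩
      have hx0 : 0 ≤ x := le_trans (by linarith) h1
      have hcoe : ((x.toNNReal : ℝ≥0) : ℝ) = x := Real.coe_toNNReal x hx0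
      refine ⟨hx0, homNeZero_of a b c d x.toNNReal ha hab ?_ ?_ ?_⟩ <;>
        rw [hcoe] <;> linarith
  · ext x
    simp only [Sset, Set.mem_setOf_eq, Set.mem_Ico]
    constructor
    · rintro ⟨hx0, hH⟩
      have hcoe : ((x.toNNReal : ℝ≥0) : ℝ) = x := Real.coe_toNNReal x hx0
      obtain ⟨h1, h2, h3⟩ := of_homNeZero c d a b x.toNNReal hc0 hH
      rw [hcoe] at h2 h3
      constructor <;> linarith
    · rintro ⟨h1, h2⟩
      have hx0 : 0 ≤ x := le_trans (by linarith) h1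
      have hcoe : ((x.toNNReal : ℝ≥0) : ℝ) = x := Real.coe_toNNReal x hx0
      refine ⟨hx0, homNeZero_of c d a b x.toNNReal hc0 hcd ?_ ?_ ?_⟩ <;>
        rw [hcoe] <;> linarith
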